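/- Consider an ODE-LTI ṗ = Ãp + Gq, z = C̃p + D̃q and its weakly unobservable subspace V (the set of initial states p₀ for which some state/input pair gives identically zero output a.e.). Then V is the largest subspace of ℝʳ for which there exists a linear map F̃ : ℝʳ → ℝˢ such that (Ã + GF̃)V ⊆ V and (C̃ + D̃F̃)V = 0. -/

import Mathlib

open MeasureTheory Set Filter Matrix

def IsNiceInterval (I : Set ℝ) : Prop :=
  (∃ a b, I = Set.Icc a b) ∨ (∃ a, I = Set.Ici a) ∨ (∃ a, I = Set.Iic a) ∨ I = Set.univ

def IsStateTraj {r : ℕ} {σ : Type} [Fintype σ] (Al : Matrix (Fin r) (Fin r) ℝ)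
    (Bl : Matrix (Fin r) σ ℝ)
    (I : Set ℝ) (p : ℝ → Fin r → ℝ) (g : ℝ → σ → ℝ) : Prop :=
  LocallyIntegrableOn p I ∧ LocallyIntegrableOn g I ∧
  ∀ t₀ ∈ I, ∀ t ∈ I, t₀ ≤ t →
    p t = p t₀ + ∫ τ in t₀..t, (Al.mulVec (p τ) + Bl.mulVec (g τ))

/-- The set of weakly unobservable initial states of the ODE-LTI `(Ã, G, C̃, D̃)`:
states from which some state/input trajectory produces identically zero output a.e. -/
def WeaklyUnobservable {r s p : ℕ} (At : Matrix (Fin r) (Fin r) ℝ)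
    (G : Matrix (Fin r) (Fin s) ℝ) (Ct : Matrix (Fin p) (Fin r) ℝ)
    (Dt : Matrix (Fin p) (Fin s) ℝ) : Set (Fin r → ℝ) :=
  {p₀ | ∃ pf qf, IsStateTraj At G (Set.Ici 0) pf qf ∧ pf 0 = p₀ ∧
    ∀ᵐ t ∂(volume.restrict (Set.Ici (0 : ℝ))),
      Ct.mulVec (pf t) + Dt.mulVec (qf t) = 0}

section Aux

variable {r s p : ℕ}

noncomputable def mulVecCLM {a b : ℕ} (M : Matrix (Fin a) (Fin b) ℝ) :
    (Fin b → ℝ) →L[ℝ] (Fin a → ℝ) :=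
  LinearMap.toContinuousLinearMap M.mulVecLin

@[simp] lemma mulVecCLM_apply {a b : ℕ} (M : Matrix (Fin a) (Fin b) ℝ) (v : Fin b → ℝ) :
    mulVecCLM M v = M.mulVec v := rfl

lemma locInt_smul {a : ℕ} (c : ℝ) {f : ℝ → Fin a → ℝ} {I : Set ℝ}
    (hf : LocallyIntegrableOn f I) : LocallyIntegrableOn (c • f) I :=
  fun x hx => (hf x hx).smul c

lemma locInt_mulVec {a b : ℕ} (M : Matrix (Fin a) (Fin b) ℝ) {f : ℝ → Fin b → ℝ} {I : Set ℝ}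
    (hf : LocallyIntegrableOn f I) :
    LocallyIntegrableOn (fun τ => M.mulVec (f τ)) I := by
  intro x hx
  obtain ⟨u, hu, hint⟩ := hf x hx
  exact ⟨u, hu, (mulVecCLM M).integrable_comp hint⟩

lemma integrand_locInt (Al : Matrix (Fin r) (Fin r) ℝ) (Bl : Matrix (Fin r) (Fin s) ℝ)
    {pf : ℝ → Fin r → ℝ} {qf : ℝ → Fin s → ℝ} {I : Set ℝ}
    (hp : LocallyIntegrableOn pf I) (hq : LocallyIntegrableOn qf I) :
    LocallyIntegrableOn (fun τ => Al.mulVec (pf τ) + Bl.mulVec (qf τ)) I :=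
  (locInt_mulVec Al hp).add (locInt_mulVec Bl hq)

lemma integrand_II (Al : Matrix (Fin r) (Fin r) ℝ) (Bl : Matrix (Fin r) (Fin s) ℝ)
    {pf : ℝ → Fin r → ℝ} {qf : ℝ → Fin s → ℝ}
    (hp : LocallyIntegrableOn pf (Ici 0)) (hq : LocallyIntegrableOn qf (Ici 0))
    {t₀ t : ℝ} (h0 : 0 ≤ t₀) (ht : t₀ ≤ t) :
    IntervalIntegrable (fun τ => Al.mulVec (pf τ) + Bl.mulVec (qf τ)) volume t₀ t := by
  have hsub : Icc t₀ t ⊆ Ici 0 := fun x hx => le_trans h0 hx.1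
  have hI : IntegrableOn (fun τ => Al.mulVec (pf τ) + Bl.mulVec (qf τ)) (Icc t₀ t) volume :=
    (integrand_locInt Al Bl hp hq).integrableOn_compact_subset hsub isCompact_Icc
  apply IntegrableOn.intervalIntegrable
  rwa [uIcc_of_le ht]

/-- The weakly unobservable set as a submodule. -/
noncomputable def wuSubmodule (At : Matrix (Fin r) (Fin r) ℝ)
    (G : Matrix (Fin r) (Fin s) ℝ) (Ct : Matrix (Fin p) (Fin r) ℝ)
    (Dt : Matrix (Fin p) (Fin s) ℝ) : Submodule ℝ (Fin r → ℝ) where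
  carrier := WeaklyUnobservable At G Ct Dt
  zero_mem' := by
    refine ⟨fun _ => 0, fun _ => 0, ⟨?_, ?_, ?_⟩, rfl, ?_⟩
    · exact (integrableOn_zero).locallyIntegrableOn
    · exact (integrableOn_zero).locallyIntegrableOn
    · intro t₀ _ t _ _
      simp [Matrix.mulVec_zero]
    · filter_upwards with t
      simp [Matrix.mulVec_zero]
  add_mem' := by
    rintro x y ⟨pf₁, qf₁, ⟨hp₁, hq₁, hi₁⟩, h0₁, hae₁⟩ ⟨pf₂, qf₂, ⟨hp₂, hq₂, hi₂⟩, h0₂, hae₂⟩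
    refine ⟨pf₁ + pf₂, qf₁ + qf₂, ⟨hp₁.add hp₂, hq₁.add hq₂, ?_⟩, by simp [h0₁, h0₂], ?_⟩
    · intro t₀ ht₀ t ht hle
      have e : (fun τ => At.mulVec ((pf₁ + pf₂) τ) + G.mulVec ((qf₁ + qf₂) τ))
          = fun τ => (At.mulVec (pf₁ τ) + G.mulVec (qf₁ τ))
            + (At.mulVec (pf₂ τ) + G.mulVec (qf₂ τ)) := by
        funext τ
        simp [Matrix.mulVec_add]
        abel
      rw [e, intervalIntegral.integral_add (integrand_II At G hp₁ hq₁ ht₀ hle)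
        (integrand_II At G hp₂ hq₂ ht₀ hle)]
      have := hi₁ t₀ ht₀ t ht hle
      have := hi₂ t₀ ht₀ t ht hle
      simp only [Pi.add_apply]
      rw [hi₁ t₀ ht₀ t ht hle, hi₂ t₀ ht₀ t ht hle]
      abel
    · filter_upwards [hae₁, hae₂] with t h1 h2
      simp only [Pi.add_apply, Matrix.mulVec_add]
      rw [show Ct.mulVec (pf₁ t) + Ct.mulVec (pf₂ t) + (Dt.mulVec (qf₁ t) + Dt.mulVec (qf₂ t))
        = (Ct.mulVec (pf₁ t) + Dt.mulVec (qf₁ t)) + (Ct.mulVec (pf₂ t) + Dt.mulVec (qf₂ t)) by abel,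
        h1, h2, add_zero]
  smul_mem' := by
    rintro c x ⟨pf, qf, ⟨hp, hq, hi⟩, h0, hae⟩
    refine ⟨c • pf, c • qf, ⟨locInt_smul c hp, locInt_smul c hq, ?_⟩, by simp [h0], ?_⟩
    · intro t₀ ht₀ t ht hle
      have e : (fun τ => At.mulVec ((c • pf) τ) + G.mulVec ((c • qf) τ))
          = fun τ => c • (At.mulVec (pf τ) + G.mulVec (qf τ)) := by
        funext τ
        simp [Matrix.mulVec_smul, smul_add]
      rw [e, intervalIntegral.integral_smul]
      simp only [Pi.smul_apply]
      rw [hi t₀ ht₀ t ht hle]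
      simp [smul_add]
    · filter_upwards [hae] with t h1
      simp only [Pi.smul_apply, Matrix.mulVec_smul]
      rw [← smul_add, h1, smul_zero]
lemma locInt_shift {E : Type*} [NormedAddCommGroup E] {f : ℝ → E}
    (hf : LocallyIntegrableOn f (Ici 0) volume) {c : ℝ} (hc : 0 ≤ c) :
    LocallyIntegrableOn (fun τ => f (τ + c)) (Ici 0) volume := by
  rw [MeasureTheory.locallyIntegrableOn_iff isClosed_Ici.isLocallyClosed] at hf ⊢
  intro k hk hkc
  have himg : ((fun τ : ℝ => τ + c) '' k) ⊆ Ici 0 := by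
    rintro x ⟨y, hy, rfl⟩
    exact add_nonneg (hk hy) hc
  have hI : IntegrableOn f ((fun τ : ℝ => τ + c) '' k) volume :=
    hf _ himg (hkc.image (continuous_id.add continuous_const))
  have hemb : MeasurableEmbedding (fun τ : ℝ => τ + c) :=
    (Homeomorph.addRight c).measurableEmbedding
  have hmap : Measure.map (fun τ : ℝ => τ + c) volume = volume :=
    (measurePreserving_add_right volume c).map_eq
  have hpre : (fun τ : ℝ => τ + c) ⁻¹' ((fun τ : ℝ => τ + c) '' k) = k :=
    Set.preimage_image_eq k (fun a b => by simp)
  have := (hemb.restrict_map (μ := volume) (s := (fun τ : ℝ => τ + c) '' k))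
  rw [hmap] at this
  unfold IntegrableOn at hI ⊢
  rw [this, hemb.integrable_map_iff, hpre] at hI
  exact hI

lemma shift_mem (At : Matrix (Fin r) (Fin r) ℝ) (G : Matrix (Fin r) (Fin s) ℝ)
    (Ct : Matrix (Fin p) (Fin r) ℝ) (Dt : Matrix (Fin p) (Fin s) ℝ)
    {pf : ℝ → Fin r → ℝ} {qf : ℝ → Fin s → ℝ}
    (hT : IsStateTraj At G (Ici 0) pf qf)
    (hae : ∀ᵐ t ∂(volume.restrict (Set.Ici (0 : ℝ))),
      Ct.mulVec (pf t) + Dt.mulVec (qf t) = 0)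
    {t₁ : ℝ} (ht₁ : 0 ≤ t₁) :
    pf t₁ ∈ WeaklyUnobservable At G Ct Dt := by
  obtain ⟨hp, hq, hi⟩ := hT
  refine ⟨fun τ => pf (τ + t₁), fun τ => qf (τ + t₁),
    ⟨locInt_shift hp ht₁, locInt_shift hq ht₁, ?_⟩, by simp, ?_⟩
  · intro τ₀ hτ₀ τ hτ hle
    have := hi (τ₀ + t₁) (by simpa using add_nonneg hτ₀ ht₁) (τ + t₁)
      (by simpa using add_nonneg hτ ht₁) (by linarith)
    beta_reduce
    rw [this]
    congr 1
    exact (intervalIntegral.integral_comp_add_right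
      (fun x => At.mulVec (pf x) + G.mulVec (qf x)) t₁).symm
  · rw [ae_iff] at hae ⊢
    rw [Measure.restrict_apply' measurableSet_Ici] at hae ⊢
    have hsub : {τ | ¬(Ct.mulVec (pf (τ + t₁)) + Dt.mulVec (qf (τ + t₁)) = 0)} ∩ Ici 0
        ⊆ (fun τ : ℝ => τ + t₁) ⁻¹' ({t | ¬(Ct.mulVec (pf t) + Dt.mulVec (qf t) = 0)} ∩ Ici 0) := by
      rintro τ ⟨h1, h2⟩
      exact ⟨h1, add_nonneg h2 ht₁⟩
    refine le_antisymm (le_trans (measure_mono hsub) ?_) zero_le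
    rw [(measurePreserving_add_right volume t₁).quasiMeasurePreserving.preimage_null hae]
/-- Key analytic lemma: every weakly unobservable state admits a one-step friend control
staying in the weakly unobservable set. -/
lemma wu_mem_S (At : Matrix (Fin r) (Fin r) ℝ) (G : Matrix (Fin r) (Fin s) ℝ)
    (Ct : Matrix (Fin p) (Fin r) ℝ) (Dt : Matrix (Fin p) (Fin s) ℝ)
    {p₀ : Fin r → ℝ} (hp₀ : p₀ ∈ WeaklyUnobservable At G Ct Dt) :
    ∃ q₀ : Fin s → ℝ, At.mulVec p₀ + G.mulVec q₀ ∈ wuSubmodule At G Ct Dt ∧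
      Ct.mulVec p₀ + Dt.mulVec q₀ = 0 := by
  classical
  obtain ⟨pf, qf, hT, hpf0, hae⟩ := hp₀
  obtain ⟨hp, hq, hi⟩ := hT
  set V := wuSubmodule At G Ct Dt with hV
  have hVc : IsClosed (V : Set (Fin r → ℝ)) := Submodule.closed_of_finiteDimensional V
  set h : ℝ → Fin r → ℝ := fun τ => At.mulVec (pf τ) + G.mulVec (qf τ) with hh
  have hhloc : LocallyIntegrableOn h (Ici 0) volume := integrand_locInt At G hp hq
  set f' : ℝ → Fin r → ℝ := (Ici (0:ℝ)).indicator h with hf'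
  have hf'loc : LocallyIntegrable f' volume := by
    rw [locallyIntegrable_iff]
    intro k hk
    rw [IntegrableOn, hf', integrable_indicator_iff measurableSet_Ici]
    have hI : IntegrableOn h (Ici 0 ∩ k) volume :=
      hhloc.integrableOn_compact_subset inter_subset_left (hk.inter_left isClosed_Ici)
    show Integrable h ((volume.restrict k).restrict (Ici 0))
    rwa [Measure.restrict_restrict measurableSet_Ici]
  -- every nonnegative time state is weakly unobservable
  have hpfV : ∀ t : ℝ, 0 ≤ t → pf t ∈ V :=
    fun t ht => shift_mem At G Ct Dt ⟨hp, hq, hi⟩ hae ht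
  -- Lebesgue differentiation
  have hleb := (IsUnifLocDoublingMeasure.vitaliFamily (volume : Measure ℝ) 1).ae_tendsto_average
    hf'loc
  set Q : ℝ → Prop := fun x => 0 < x ∧
    Tendsto (fun y => ⨍ t in Icc x y, f' t) (nhdsWithin x (Ioi x)) (nhds (f' x)) ∧
    Ct.mulVec (pf x) + Dt.mulVec (qf x) = 0 with hQ
  have hQae : ∀ᵐ x ∂(volume.restrict (Ici (0:ℝ))), Q x := by
    have h1 : ∀ᵐ x ∂(volume.restrict (Ici (0:ℝ))),
        Tendsto (fun y => ⨍ t in Icc x y, f' t) (nhdsWithin x (Ioi x)) (nhds (f' x)) :=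
      ae_restrict_of_ae (hleb.mono fun x hx =>
        hx.comp (Real.tendsto_Icc_vitaliFamily_right x))
    have h2 : ∀ᵐ x ∂(volume.restrict (Ici (0:ℝ))), x ≠ 0 :=
      ae_restrict_of_ae (by
        have : (volume : Measure ℝ) {(0:ℝ)} = 0 := measure_singleton 0
        rw [ae_iff]
        simpa using this)
    filter_upwards [h1, h2, hae, ae_restrict_mem measurableSet_Ici] with x hx1 hx2 hx3 hx4
    exact ⟨lt_of_le_of_ne hx4 (Ne.symm hx2), hx1, hx3⟩
  -- at points satisfying Q, the derivative lies in V
  have key : ∀ x : ℝ, Q x →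
      At.mulVec (pf x) + G.mulVec (qf x) ∈ V ∧ Ct.mulVec (pf x) + Dt.mulVec (qf x) = 0 := by
    rintro x ⟨hx0, hxT, hxout⟩
    have heq : ∀ᶠ y in nhdsWithin x (Ioi x),
        (⨍ t in Icc x y, f' t) = (y - x)⁻¹ • (pf y - pf x) := by
      filter_upwards [self_mem_nhdsWithin] with y (hy : x < y)
      have hIcc : Icc x y ⊆ Ici (0:ℝ) := fun t ht => le_trans hx0.le ht.1
      have e1 : ∫ t in Icc x y, f' t = ∫ t in Icc x y, h t := by
        apply setIntegral_congr_fun measurableSet_Icc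
        intro t ht
        exact indicator_of_mem (hIcc ht) h
      have e2 : ∫ t in Icc x y, h t = pf y - pf x := by
        rw [integral_Icc_eq_integral_Ioc, ← intervalIntegral.integral_of_le hy.le]
        rw [hi x hx0.le y (le_trans hx0.le hy.le) hy.le]
        abel
      rw [setAverage_eq, e1, e2, Real.volume_real_Icc, max_eq_left (sub_nonneg.mpr hy.le)]
    have hmemV : ∀ᶠ y in nhdsWithin x (Ioi x), (⨍ t in Icc x y, f' t) ∈ (V : Set (Fin r → ℝ)) := by
      filter_upwards [heq, self_mem_nhdsWithin] with y hy1 (hy2 : x < y)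
      rw [hy1]
      exact V.smul_mem _ (V.sub_mem (hpfV y (le_trans hx0.le hy2.le)) (hpfV x hx0.le))
    have hlim : f' x ∈ (V : Set (Fin r → ℝ)) := hVc.mem_of_tendsto hxT hmemV
    rw [hf', Set.indicator_of_mem (mem_Ici.mpr hx0.le) h] at hlim
    exact ⟨hlim, hxout⟩
  -- extract a sequence of good points tending to 0
  have hex : ∀ n : ℕ, ∃ x : ℝ, x ∈ Ioc (0:ℝ) (1 / (n + 1)) ∧ Q x := by
    intro n
    by_contra hcon
    push_neg at hcon
    have hsub : Ioc (0:ℝ) (1 / (n + 1)) ⊆ {x | ¬ Q x} := fun x hx => hcon x hx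
    have h0 : (volume.restrict (Ici (0:ℝ))) {x | ¬ Q x} = 0 := by
      rw [ae_iff] at hQae
      exact hQae
    have hle : (volume.restrict (Ici (0:ℝ))) (Ioc (0:ℝ) (1 / (n + 1))) = 0 :=
      le_antisymm (h0 ▸ measure_mono hsub) zero_le
    rw [Measure.restrict_apply' measurableSet_Ici] at hle
    have : Ioc (0:ℝ) (1 / (n + 1)) ∩ Ici 0 = Ioc (0:ℝ) (1 / (n + 1)) := by
      apply inter_eq_self_of_subset_left
      exact fun x hx => hx.1.le
    rw [this, Real.volume_Ioc] at hle
    have hpos : (0:ℝ) < 1 / (n + 1) := by positivity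
    simp only [sub_zero] at hle
    rw [ENNReal.ofReal_eq_zero] at hle
    linarith
  choose u hu using hex
  have hupos : ∀ n, 0 < u n := fun n => (hu n).1.1
  have htend : Tendsto u atTop (nhds 0) := by
    have hle : ∀ n : ℕ, u n ≤ 1 / (n + 1) := fun n => (hu n).1.2
    have h1 : Tendsto (fun n : ℕ => 1 / ((n:ℝ) + 1)) atTop (nhds 0) :=
      tendsto_one_div_add_atTop_nhds_zero_nat
    exact tendsto_of_tendsto_of_tendsto_of_le_of_le tendsto_const_nhds h1
      (fun n => (hupos n).le) hle
  -- continuity of pf at 0 from the right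
  have hpfu : Tendsto (fun n => pf (u n)) atTop (nhds p₀) := by
    have hint01 : IntegrableOn h (uIcc (0:ℝ) 1) volume := by
      rw [uIcc_of_le zero_le_one]
      exact hhloc.integrableOn_compact_subset (fun t ht => ht.1) isCompact_Icc
    have hg : ContinuousOn (fun x => ∫ τ in (0:ℝ)..x, h τ) (uIcc (0:ℝ) 1) :=
      intervalIntegral.continuousOn_primitive_interval hint01
    have hg0 : ContinuousWithinAt (fun x => ∫ τ in (0:ℝ)..x, h τ) (Icc (0:ℝ) 1) 0 := by
      have := hg 0 (by rw [uIcc_of_le zero_le_one]; exact ⟨le_refl 0, zero_le_one⟩)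
      rwa [uIcc_of_le zero_le_one] at this
    have humem : ∀ n, u n ∈ Icc (0:ℝ) 1 := by
      intro n
      refine ⟨(hupos n).le, le_trans (hu n).1.2 ?_⟩
      rw [div_le_one (by positivity)]
      linarith [(Nat.cast_nonneg n : (0:ℝ) ≤ n)]
    have htendW : Tendsto u atTop (nhdsWithin 0 (Icc (0:ℝ) 1)) :=
      tendsto_nhdsWithin_of_tendsto_nhds_of_eventually_within u htend
        (Filter.Eventually.of_forall humem)
    have hgu : Tendsto (fun n => ∫ τ in (0:ℝ)..(u n), h τ) atTop (nhds 0) := by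
      have := hg0.tendsto.comp htendW
      simpa [Function.comp_def] using this
    have hrep : ∀ n, pf (u n) = p₀ + ∫ τ in (0:ℝ)..(u n), h τ := by
      intro n
      rw [← hpf0]
      exact hi 0 (mem_Ici.mpr le_rfl) (u n) (mem_Ici.mpr (hupos n).le) (hupos n).le
    have : Tendsto (fun n => p₀ + ∫ τ in (0:ℝ)..(u n), h τ) atTop (nhds (p₀ + 0)) :=
      tendsto_const_nhds.add hgu
    rw [add_zero] at this
    exact this.congr (fun n => (hrep n).symm)
  -- the subspace S of states admitting a one-step friend control
  set L : ((Fin r → ℝ) × (Fin s → ℝ)) →ₗ[ℝ] ((Fin r → ℝ) × (Fin p → ℝ)) :=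
    LinearMap.prod
      (At.mulVecLin.comp (LinearMap.fst ℝ _ _) + G.mulVecLin.comp (LinearMap.snd ℝ _ _))
      (Ct.mulVecLin.comp (LinearMap.fst ℝ _ _) + Dt.mulVecLin.comp (LinearMap.snd ℝ _ _)) with hL
  set S : Submodule ℝ (Fin r → ℝ) :=
    Submodule.map (LinearMap.fst ℝ _ _)
      (Submodule.comap L (V.prod (⊥ : Submodule ℝ (Fin p → ℝ)))) with hSdef
  have hSmem : ∀ x : Fin r → ℝ, x ∈ S ↔ ∃ q : Fin s → ℝ,
      At.mulVec x + G.mulVec q ∈ V ∧ Ct.mulVec x + Dt.mulVec q = 0 := by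
    intro x
    constructor
    · rintro ⟨⟨a, q⟩, haq, rfl⟩
      rw [SetLike.mem_coe, Submodule.mem_comap] at haq
      obtain ⟨h1, h2⟩ := Submodule.mem_prod.mp haq
      simp only [hL, LinearMap.prod_apply, Pi.prod, LinearMap.add_apply, LinearMap.comp_apply,
        LinearMap.fst_apply, LinearMap.snd_apply, Matrix.mulVecLin_apply,
        Submodule.mem_bot] at h1 h2
      exact ⟨q, h1, h2⟩
    · rintro ⟨q, h1, h2⟩
      refine ⟨(x, q), ?_, rfl⟩
      rw [SetLike.mem_coe, Submodule.mem_comap, Submodule.mem_prod]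
      simp only [hL, LinearMap.prod_apply, Pi.prod, LinearMap.add_apply, LinearMap.comp_apply,
        LinearMap.fst_apply, LinearMap.snd_apply, Matrix.mulVecLin_apply, Submodule.mem_bot]
      exact ⟨h1, h2⟩
  have hSc : IsClosed (S : Set (Fin r → ℝ)) := Submodule.closed_of_finiteDimensional S
  have huS : ∀ n, pf (u n) ∈ (S : Set (Fin r → ℝ)) := by
    intro n
    obtain ⟨h1, h2⟩ := key (u n) (hu n).2
    exact (hSmem (pf (u n))).mpr ⟨qf (u n), h1, h2⟩
  have hp₀S : p₀ ∈ S := hSc.mem_of_tendsto hpfu (Filter.Eventually.of_forall huS)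
  exact (hSmem p₀).mp hp₀S

end Aux

section FriendConstr

variable {r s p : ℕ}

/-- Given that every element of `V` admits a pointwise friend control, construct a single
linear friend `F`. -/
lemma exists_friend (At : Matrix (Fin r) (Fin r) ℝ) (G : Matrix (Fin r) (Fin s) ℝ)
    (Ct : Matrix (Fin p) (Fin r) ℝ) (Dt : Matrix (Fin p) (Fin s) ℝ)
    (V : Submodule ℝ (Fin r → ℝ))
    (hS : ∀ v ∈ V, ∃ q : Fin s → ℝ,
      At.mulVec v + G.mulVec q ∈ V ∧ Ct.mulVec v + Dt.mulVec q = 0) :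
    ∃ F : Matrix (Fin s) (Fin r) ℝ,
      (∀ v ∈ V, (At + G * F).mulVec v ∈ V) ∧ (∀ v ∈ V, (Ct + Dt * F).mulVec v = 0) := by
  classical
  set B := Module.Basis.ofVectorSpace ℝ V with hB
  choose q hq1 hq2 using fun i => hS (B i) (B i).2
  set φ : V →ₗ[ℝ] (Fin s → ℝ) := B.constr ℝ q with hφ
  obtain ⟨F₀, hF₀⟩ := φ.exists_extend
  set F : Matrix (Fin s) (Fin r) ℝ := LinearMap.toMatrix' F₀ with hF
  have hFmul : ∀ v : Fin r → ℝ, F.mulVec v = F₀ v := by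
    intro v
    rw [hF, ← Matrix.toLin'_apply, Matrix.toLin'_toMatrix']
  have hFφ : ∀ v : V, F.mulVec (v : Fin r → ℝ) = φ v := by
    intro v
    rw [hFmul]
    have := congrArg (fun f => f v) hF₀
    simpa using this
  -- the set of v : V satisfying both conditions is a submodule containing the basis
  set T : V →ₗ[ℝ] (Fin r → ℝ) × (Fin p → ℝ) :=
    LinearMap.prod
      (At.mulVecLin.comp V.subtype + G.mulVecLin.comp φ)
      (Ct.mulVecLin.comp V.subtype + Dt.mulVecLin.comp φ) with hT
  have hU : ∀ v : V, T v ∈ V.prod (⊥ : Submodule ℝ (Fin p → ℝ)) := by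
    have hle : (⊤ : Submodule ℝ V) ≤ Submodule.comap T (V.prod ⊥) := by
      rw [← B.span_eq]
      rw [Submodule.span_le]
      rintro x ⟨i, rfl⟩
      simp only [SetLike.mem_coe, Submodule.mem_comap, hT, LinearMap.prod_apply, Pi.prod,
        Function.prod, LinearMap.add_apply, LinearMap.comp_apply, Submodule.coe_subtype,
        Matrix.mulVecLin_apply, Submodule.mem_prod, Submodule.mem_bot]
      constructor
      · have : φ (B i) = q i := B.constr_basis ℝ q i
        rw [this]
        exact hq1 i
      · have : φ (B i) = q i := B.constr_basis ℝ q i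
        rw [this]
        exact hq2 i
    intro v
    exact Submodule.mem_comap.mp (hle Submodule.mem_top)
  refine ⟨F, ?_, ?_⟩
  · intro v hv
    have h1 := (Submodule.mem_prod.mp (hU ⟨v, hv⟩)).1
    simp only [hT, LinearMap.prod_apply, Pi.prod, LinearMap.add_apply, LinearMap.comp_apply,
      Submodule.coe_subtype, Matrix.mulVecLin_apply] at h1
    rw [Matrix.add_mulVec, ← Matrix.mulVec_mulVec, hFφ ⟨v, hv⟩]
    exact h1
  · intro v hv
    have h2 := (Submodule.mem_prod.mp (hU ⟨v, hv⟩)).2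
    simp only [hT, LinearMap.prod_apply, Pi.prod, LinearMap.add_apply, LinearMap.comp_apply,
      Submodule.coe_subtype, Matrix.mulVecLin_apply, Submodule.mem_bot] at h2
    rw [Matrix.add_mulVec, ← Matrix.mulVec_mulVec, hFφ ⟨v, hv⟩]
    exact h2

end FriendConstr

section Friend

attribute [local instance] Matrix.linftyOpNormedAddCommGroup Matrix.linftyOpNormedSpace
  Matrix.linftyOpNormedRing Matrix.linftyOpNormedAlgebra

open NormedSpace

variable {r s p : ℕ}

/-- `A ↦ A.mulVec w₀` as a continuous linear map. -/
noncomputable def mulVecAtCLM (w₀ : Fin r → ℝ) :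
    Matrix (Fin r) (Fin r) ℝ →L[ℝ] (Fin r → ℝ) :=
  LinearMap.toContinuousLinearMap
    { toFun := fun A => A.mulVec w₀
      map_add' := fun A B => Matrix.add_mulVec A B w₀
      map_smul' := fun c A => Matrix.smul_mulVec c A w₀ }

@[simp] lemma mulVecAtCLM_apply (w₀ : Fin r → ℝ) (A : Matrix (Fin r) (Fin r) ℝ) :
    mulVecAtCLM w₀ A = A.mulVec w₀ := rfl

lemma pow_mulVec_mem (M : Matrix (Fin r) (Fin r) ℝ) (W : Submodule ℝ (Fin r → ℝ))
    (hM : ∀ w ∈ W, M.mulVec w ∈ W) (n : ℕ) {w : Fin r → ℝ} (hw : w ∈ W) :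
    (M ^ n).mulVec w ∈ W := by
  induction n with
  | zero => simpa using hw
  | succ n ih =>
    rw [pow_succ', ← Matrix.mulVec_mulVec]
    exact hM _ ih

lemma exp_mulVec_mem (M : Matrix (Fin r) (Fin r) ℝ) (W : Submodule ℝ (Fin r → ℝ))
    (hM : ∀ w ∈ W, M.mulVec w ∈ W) {w : Fin r → ℝ} (hw : w ∈ W) :
    (exp M).mulVec w ∈ W := by
  have hWc : IsClosed (W : Set (Fin r → ℝ)) := Submodule.closed_of_finiteDimensional W
  have hsum : Summable fun n : ℕ => (Nat.factorial n : ℝ)⁻¹ • M ^ n := expSeries_summable' (𝕂 := ℝ) M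
  have he : (exp M).mulVec w = ∑' n : ℕ, (Nat.factorial n : ℝ)⁻¹ • (M ^ n).mulVec w := by
    have := (mulVecAtCLM w).map_tsum hsum
    rw [exp_eq_tsum ℝ]
    simpa [Matrix.smul_mulVec] using this
  rw [he]
  have hterm : ∀ n : ℕ, (Nat.factorial n : ℝ)⁻¹ • (M ^ n).mulVec w ∈ W := fun n =>
    W.smul_mem _ (pow_mulVec_mem M W hM n hw)
  have hsum2 : Summable fun n : ℕ => (Nat.factorial n : ℝ)⁻¹ • (M ^ n).mulVec w := by
    have h := hsum.map (mulVecAtCLM w).toLinearMap (mulVecAtCLM w).continuous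
    have e : (⇑(mulVecAtCLM w) ∘ fun n : ℕ => (Nat.factorial n : ℝ)⁻¹ • M ^ n)
        = fun n : ℕ => (Nat.factorial n : ℝ)⁻¹ • (M ^ n).mulVec w := by
      funext n
      simp [Function.comp, Matrix.smul_mulVec]
    simp only [ContinuousLinearMap.coe_coe] at h
    rwa [e] at h
  have hhs := hsum2.hasSum
  exact hWc.mem_of_tendsto hhs (Filter.Eventually.of_forall fun t => W.sum_mem fun i _ => hterm i)

lemma friend_subset_wu (At : Matrix (Fin r) (Fin r) ℝ) (G : Matrix (Fin r) (Fin s) ℝ)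
    (Ct : Matrix (Fin p) (Fin r) ℝ) (Dt : Matrix (Fin p) (Fin s) ℝ)
    (W : Submodule ℝ (Fin r → ℝ)) (F : Matrix (Fin s) (Fin r) ℝ)
    (hinv : ∀ w ∈ W, (At + G * F).mulVec w ∈ W)
    (hout : ∀ w ∈ W, (Ct + Dt * F).mulVec w = 0) :
    (W : Set (Fin r → ℝ)) ⊆ WeaklyUnobservable At G Ct Dt := by
  intro w₀ hw₀
  set M : Matrix (Fin r) (Fin r) ℝ := At + G * F with hM
  set pf : ℝ → Fin r → ℝ := fun t => (exp (t • M)).mulVec w₀ with hpf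
  set qf : ℝ → Fin s → ℝ := fun t => F.mulVec (pf t) with hqf
  have hpd : ∀ t : ℝ, HasDerivAt pf (M.mulVec (pf t)) t := by
    intro t
    have h1 : HasDerivAt (fun u : ℝ => exp (u • M)) (M * exp (t • M)) t :=
      hasDerivAt_exp_smul_const' M t
    have h2 := (mulVecAtCLM w₀).hasFDerivAt.comp_hasDerivAt t h1
    refine h2.congr_deriv ?_
    show (M * exp (t • M)) *ᵥ w₀ = M *ᵥ pf t
    rw [← Matrix.mulVec_mulVec]
  have hpc : Continuous pf := by
    rw [continuous_iff_continuousAt]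
    exact fun t => (hpd t).continuousAt
  have hpfmem : ∀ t : ℝ, pf t ∈ W := by
    intro t
    apply exp_mulVec_mem (t • M) W _ hw₀
    intro w hw
    rw [Matrix.smul_mulVec]
    exact W.smul_mem t (hinv w hw)
  have hqc : Continuous qf := by
    have : Continuous fun v : Fin r → ℝ => F.mulVec v :=
      (LinearMap.toContinuousLinearMap F.mulVecLin).continuous
    exact this.comp hpc
  refine ⟨pf, qf, ⟨(hpc.locallyIntegrable).locallyIntegrableOn _,
    (hqc.locallyIntegrable).locallyIntegrableOn _, ?_⟩, ?_, ?_⟩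
  · intro t₀ _ t _ hle
    have key : ∀ τ : ℝ, At.mulVec (pf τ) + G.mulVec (qf τ) = M.mulVec (pf τ) := by
      intro τ
      rw [hM, Matrix.add_mulVec, ← Matrix.mulVec_mulVec, hqf]
    have hInt : IntervalIntegrable (fun τ => M.mulVec (pf τ)) volume t₀ t := by
      have : Continuous fun τ => M.mulVec (pf τ) :=
        ((LinearMap.toContinuousLinearMap M.mulVecLin).continuous).comp hpc
      exact this.intervalIntegrable t₀ t
    have := intervalIntegral.integral_eq_sub_of_hasDerivAt (fun τ _ => hpd τ) hInt
    simp only [key]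
    rw [this]
    abel
  · simp [hpf]
  · filter_upwards with t
    have := hout (pf t) (hpfmem t)
    rw [Matrix.add_mulVec, ← Matrix.mulVec_mulVec] at this
    exact this

end Friend


/-- Theorem (geometric characterization): the weakly unobservable set  is the largest
subspace admitting a friend  with  and . -/
theorem weaklyUnobservable_largest_friend_subspace {r s p : ℕ}
    (At : Matrix (Fin r) (Fin r) ℝ) (G : Matrix (Fin r) (Fin s) ℝ)
    (Ct : Matrix (Fin p) (Fin r) ℝ) (Dt : Matrix (Fin p) (Fin s) ℝ) :
    ∃ V : Submodule ℝ (Fin r → ℝ),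
      (V : Set (Fin r → ℝ)) = WeaklyUnobservable At G Ct Dt ∧
      (∃ F : Matrix (Fin s) (Fin r) ℝ,
        (∀ v ∈ V, (At + G * F).mulVec v ∈ V) ∧
        (∀ v ∈ V, (Ct + Dt * F).mulVec v = 0)) ∧
      ∀ W : Submodule ℝ (Fin r → ℝ),
        (∃ F : Matrix (Fin s) (Fin r) ℝ,
          (∀ w ∈ W, (At + G * F).mulVec w ∈ W) ∧
          (∀ w ∈ W, (Ct + Dt * F).mulVec w = 0)) →
        W ≤ V := by
  refine ⟨wuSubmodule At G Ct Dt, rfl, ?_, ?_⟩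
  · exact exists_friend At G Ct Dt (wuSubmodule At G Ct Dt)
      (fun v hv => wu_mem_S At G Ct Dt hv)
  · rintro W ⟨F, hinv, hout⟩
    intro w hw
    exact friend_subset_wu At G Ct Dt W F hinv hout hw
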